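/- Let SL(2, 𝔽₃) denote the group of 2 × 2 matrices of determinant 1 over the field with 3 elements (the binary tetrahedral group, isomorphic to Q₈ ⋊ C₃, of order 24). There is no injective group homomorphism ρ : SL(2, 𝔽₃) → SL(3, ℂ) such that every matrix in the image of ρ has 1 as an eigenvalue and the only vector v ∈ ℂ³ satisfying ρ(g)v = v for all g ∈ SL(2, 𝔽₃) is v = 0. -/
import Mathlib

open Matrix Module

abbrev G3 := Matrix.SpecialLinearGroup (Fin 2) (ZMod 3)

instance : DecidableEq G3 :=
  inferInstanceAs (DecidableEq {A : Matrix (Fin 2) (Fin 2) (ZMod 3) // A.det = 1})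

def zmat : G3 := ⟨!![2,0;0,2], by decide⟩
def cmat : G3 := ⟨!![1,1;0,1], by decide⟩
def imat : G3 := ⟨!![0,2;1,0], by decide⟩
def jmat : G3 := ⟨!![1,1;1,2], by decide⟩
def kmat : G3 := ⟨!![2,1;1,1], by decide⟩

lemma gl_central : ∀ g : G3, g * zmat = zmat * g := by decide
lemma gl_zz : zmat * zmat = 1 := by decide
lemma gl_zne : zmat ≠ 1 := by decide
lemma gl_ii : imat * imat = zmat := by decide
lemma gl_ci : cmat * imat = jmat * cmat := by decide
lemma gl_cj : cmat * jmat = kmat * cmat := by decide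
lemma gl_ij : imat * jmat = kmat := by decide
lemma gl_class : ∀ g : G3, g^3 = 1 ∨ ((g*g)^3 = 1 ∧ g^3 = zmat) ∨ g = imat ∨ g = jmat
    ∨ g = kmat ∨ g = zmat * imat ∨ g = zmat * jmat ∨ g = zmat * kmat := by decide

lemma cube (g : G3) : g ^ 3 = g * g * g := by rw [pow_succ, pow_two]

/-- The eigen-character of a one-dimensional invariant line. -/
lemma chi_main (f : G3 → Matrix (Fin 3) (Fin 3) ℂ)
    (hf1 : f 1 = 1) (hfm : ∀ g h, f (g * h) = f g * f h)
    {w₀ : Fin 3 → ℂ} (hw : w₀ ≠ 0)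
    (hinv : ∀ g, ∃ a : ℂ, (f g) *ᵥ w₀ = a • w₀) :
    ∃ χ : G3 → ℂ, (∀ g, (f g) *ᵥ w₀ = χ g • w₀) ∧ (∀ g h, χ (g * h) = χ g * χ h)
      ∧ χ 1 = 1 ∧ χ zmat = 1 ∧ χ imat = 1 ∧ χ jmat = 1 ∧ χ kmat = 1 := by
  choose χ hχ using hinv
  have scal : ∀ a b : ℂ, a • w₀ = b • w₀ → a = b := by
    intro a b h
    by_contra hne
    apply hw
    have h0 : (a - b) • w₀ = 0 := by rw [sub_smul, h, sub_self]
    rcases smul_eq_zero.mp h0 with h1 | h1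
    · exact absurd (sub_eq_zero.mp h1) hne
    · exact absurd h1 hw
  have hmul : ∀ g h, χ (g * h) = χ g * χ h := by
    intro g h
    have e1 : f (g * h) *ᵥ w₀ = (χ g * χ h) • w₀ := by
      rw [hfm, ← mulVec_mulVec, hχ h, mulVec_smul, hχ g, smul_smul, mul_comm]
    exact scal _ _ ((hχ _).symm.trans e1)
  have hone : χ 1 = 1 := by
    have e1 : f 1 *ᵥ w₀ = (1 : ℂ) • w₀ := by rw [hf1, one_mulVec, one_smul]
    exact scal _ _ ((hχ 1).symm.trans e1)
  have hne0 : ∀ g, χ g ≠ 0 := by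
    intro g
    have : χ g * χ g⁻¹ = 1 := by rw [← hmul, mul_inv_cancel, hone]
    exact left_ne_zero_of_mul_eq_one this
  have hij : χ imat = χ jmat := by
    have e := congrArg χ gl_ci
    rw [hmul, hmul, mul_comm (χ jmat)] at e
    exact mul_left_cancel₀ (hne0 cmat) e
  have hjk : χ jmat = χ kmat := by
    have e := congrArg χ gl_cj
    rw [hmul, hmul, mul_comm (χ kmat)] at e
    exact mul_left_cancel₀ (hne0 cmat) e
  have hik : χ kmat = χ imat * χ jmat := by rw [← hmul, gl_ij]
  have hi1 : χ imat = 1 := by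
    have e : χ imat * 1 = χ imat * χ imat := by
      rw [mul_one]
      calc χ imat = χ kmat := hij.trans hjk
        _ = χ imat * χ jmat := hik
        _ = χ imat * χ imat := by rw [← hij]
    exact (mul_left_cancel₀ (hne0 imat) e).symm
  have hz1 : χ zmat = 1 := by
    rw [← gl_ii, hmul, hi1, mul_one]
  exact ⟨χ, hχ, hmul, hone, hz1, hi1, hij ▸ hi1, (hij.trans hjk) ▸ hi1⟩

/-- Elimination of case (IV₂) in the proof of Lemma (2.15): there is no
injective homomorphism `ρ : SL(2, 𝔽₃) → SL(3, ℂ)` such that every matrix in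
the image has `1` as an eigenvalue while only `0` is invariant under the whole
image. -/
theorem stmt_18 :
    ¬ ∃ ρ : Matrix.SpecialLinearGroup (Fin 2) (ZMod 3) →*
        Matrix.SpecialLinearGroup (Fin 3) ℂ,
      Function.Injective ρ ∧
      (∀ g, ∃ v : Fin 3 → ℂ, v ≠ 0 ∧
        Matrix.mulVec (ρ g : Matrix (Fin 3) (Fin 3) ℂ) v = v) ∧
      (∀ v : Fin 3 → ℂ,
        (∀ g, Matrix.mulVec (ρ g : Matrix (Fin 3) (Fin 3) ℂ) v = v) → v = 0) := by
  rintro ⟨ρ, hinj, hev, hfix⟩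
  set f : G3 → Matrix (Fin 3) (Fin 3) ℂ :=
    fun g => ((ρ g : Matrix.SpecialLinearGroup (Fin 3) ℂ) : Matrix (Fin 3) (Fin 3) ℂ) with hfdef
  have hf1 : f 1 = 1 := by simp [hfdef]
  have hfm : ∀ g h : G3, f (g * h) = f g * f h := by intro g h; simp [hfdef]
  set Z := f zmat with hZdef
  have hZZ : Z * Z = 1 := by rw [hZdef, ← hfm, gl_zz, hf1]
  have hcomm : ∀ g, f g * Z = Z * f g := fun g => by rw [hZdef, ← hfm, ← hfm, gl_central]
  have hZne : Z ≠ 1 := by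
    intro h
    apply gl_zne
    apply hinj
    apply Subtype.ext
    rw [_root_.map_one]
    exact h
  have hWp : ∀ v : Fin 3 → ℂ, Z *ᵥ ((2⁻¹:ℂ) • (v + Z *ᵥ v)) = (2⁻¹:ℂ) • (v + Z *ᵥ v) := by
    intro v
    rw [mulVec_smul, mulVec_add, mulVec_mulVec, hZZ, one_mulVec, add_comm]
  have hUp : ∀ v : Fin 3 → ℂ, Z *ᵥ ((2⁻¹:ℂ) • (v - Z *ᵥ v)) = -((2⁻¹:ℂ) • (v - Z *ᵥ v)) := by
    intro v
    rw [mulVec_smul, mulVec_sub, mulVec_mulVec, hZZ, one_mulVec, ← smul_neg, neg_sub]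
  have hsum : ∀ v : Fin 3 → ℂ, (2⁻¹:ℂ) • (v + Z *ᵥ v) + (2⁻¹:ℂ) • (v - Z *ᵥ v) = v := by
    intro v; module
  have twotor : ∀ d : Fin 3 → ℂ, d = -d → d = 0 := by
    intro d hd
    have h2 : (2:ℂ) • d = 0 := by rw [two_smul]; nth_rewrite 1 [hd]; rw [neg_add_cancel]
    rcases smul_eq_zero.mp h2 with h | h
    · norm_num at h
    · exact h
  let W : Submodule ℂ (Fin 3 → ℂ) :=
    { carrier := {v | Z *ᵥ v = v}
      add_mem' := fun ha hb => by
        simp only [Set.mem_setOf_eq] at *; rw [mulVec_add, ha, hb]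
      zero_mem' := by simp only [Set.mem_setOf_eq]; rw [mulVec_zero]
      smul_mem' := fun c x hx => by
        simp only [Set.mem_setOf_eq] at *; rw [mulVec_smul, hx] }
  let U : Submodule ℂ (Fin 3 → ℂ) :=
    { carrier := {v | Z *ᵥ v = -v}
      add_mem' := fun ha hb => by
        simp only [Set.mem_setOf_eq] at *; rw [mulVec_add, ha, hb, neg_add]
      zero_mem' := by simp only [Set.mem_setOf_eq]; rw [mulVec_zero, neg_zero]
      smul_mem' := fun c x hx => by
        simp only [Set.mem_setOf_eq] at *; rw [mulVec_smul, hx, smul_neg] }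
  have hmemW : ∀ v, v ∈ W ↔ Z *ᵥ v = v := fun v => Iff.rfl
  have hmemU : ∀ v, v ∈ U ↔ Z *ᵥ v = -v := fun v => Iff.rfl
  have hcompl : IsCompl W U := by
    constructor
    · rw [Submodule.disjoint_def]
      intro x hxW hxU
      exact twotor x (((hmemW x).mp hxW).symm.trans ((hmemU x).mp hxU))
    · rw [codisjoint_iff, eq_top_iff]
      intro v _
      exact Submodule.mem_sup.mpr
        ⟨_, (hmemW _).mpr (hWp v), _, (hmemU _).mpr (hUp v), hsum v⟩
  have h3 : finrank ℂ W + finrank ℂ U = 3 := by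
    rw [Submodule.finrank_add_eq_of_isCompl hcompl, Module.finrank_fintype_fun_eq_card]
    simp
  obtain ⟨v0, hv0ne, hv0⟩ := hev zmat
  have hv0W : v0 ∈ W := (hmemW v0).mpr hv0
  have hWpos : 0 < finrank ℂ W :=
    Module.finrank_pos_iff_exists_ne_zero.mpr
      ⟨⟨v0, hv0W⟩, fun h => hv0ne (congrArg Subtype.val h)⟩
  obtain ⟨v1, hv1⟩ : ∃ v, Z *ᵥ v ≠ v := by
    by_contra hall
    push_neg at hall
    apply hZne
    ext i j
    have h := congrFun (hall (Pi.single j 1)) i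
    rw [mulVec_single] at h
    simpa [Matrix.one_apply, Pi.single_apply, eq_comm] using h
  have hu1ne : (2⁻¹:ℂ) • (v1 - Z *ᵥ v1) ≠ 0 := by
    intro h
    rcases smul_eq_zero.mp h with h | h
    · norm_num at h
    · exact hv1 (sub_eq_zero.mp h).symm
  have hUpos : 0 < finrank ℂ U :=
    Module.finrank_pos_iff_exists_ne_zero.mpr
      ⟨⟨_, (hmemU _).mpr (hUp v1)⟩, fun h => hu1ne (congrArg Subtype.val h)⟩
  have hcases : finrank ℂ W = 1 ∨ finrank ℂ U = 1 := by omega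
  rcases hcases with hr | hr
  · -- finrank W = 1
    have hWspan : W = Submodule.span ℂ {v0} := by
      refine (Submodule.eq_of_le_of_finrank_le ?_ ?_).symm
      · rwa [Submodule.span_singleton_le_iff_mem]
      · rw [finrank_span_singleton hv0ne, hr]
    have hinvL : ∀ g, ∃ a : ℂ, f g *ᵥ v0 = a • v0 := by
      intro g
      have hm : f g *ᵥ v0 ∈ W := by
        rw [hmemW, mulVec_mulVec, ← hcomm g, ← mulVec_mulVec, hv0]
      rw [hWspan, Submodule.mem_span_singleton] at hm
      obtain ⟨a, ha⟩ := hm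
      exact ⟨a, ha.symm⟩
    obtain ⟨χ, hχ, hmul, hone, hχz, hχi, hχj, hχk⟩ := chi_main f hf1 hfm hv0ne hinvL
    have scal : ∀ a b : ℂ, a • v0 = b • v0 → a = b := by
      intro a b h
      by_contra hne
      apply hv0ne
      have h0 : (a - b) • v0 = 0 := by rw [sub_smul, h, sub_self]
      rcases smul_eq_zero.mp h0 with h1 | h1
      · exact absurd (sub_eq_zero.mp h1) hne
      · exact absurd h1 hv0ne
    by_cases htriv : ∀ g, χ g = 1
    · apply hv0ne
      apply hfix
      intro g
      have h := hχ g
      rw [htriv g, one_smul] at h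
      exact h
    · push_neg at htriv
      obtain ⟨g₀, hg₀⟩ := htriv
      have hcc : ∃ c' : G3, c' ^ 3 = 1 ∧ χ c' ≠ 1 := by
        rcases gl_class g₀ with h | ⟨h23, h3z⟩ | h | h | h | h | h | h
        · exact ⟨g₀, h, hg₀⟩
        · refine ⟨g₀ * g₀, h23, fun h1 => hg₀ ?_⟩
          have e3 : χ (g₀ * g₀) * χ g₀ = 1 := by
            rw [← hmul, ← cube, h3z, hχz]
          rwa [h1, one_mul] at e3
        · exact absurd (by rw [h, hχi]) hg₀
        · exact absurd (by rw [h, hχj]) hg₀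
        · exact absurd (by rw [h, hχk]) hg₀
        · exact absurd (by rw [h, hmul, hχz, hχi, mul_one]) hg₀
        · exact absurd (by rw [h, hmul, hχz, hχj, mul_one]) hg₀
        · exact absurd (by rw [h, hmul, hχz, hχk, mul_one]) hg₀
      obtain ⟨c', hc3, hχc⟩ := hcc
      obtain ⟨v, hvne, hv⟩ := hev (zmat * c')
      set R := f c' with hRdef
      have hv' : (Z * R) *ᵥ v = v := by rw [hZdef, hRdef, ← hfm]; exact hv
      set wv := (2⁻¹:ℂ) • (v + Z *ᵥ v) with hwvdef
      set uv := (2⁻¹:ℂ) • (v - Z *ᵥ v) with huvdef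
      have hZwv : Z *ᵥ wv = wv := hWp v
      have hZuv : Z *ᵥ uv = -uv := hUp v
      have hRZ : R * Z = Z * R := hcomm c'
      have hx : Z *ᵥ (R *ᵥ wv) = R *ᵥ wv := by
        rw [mulVec_mulVec, ← hRZ, ← mulVec_mulVec, hZwv]
      have hy : Z *ᵥ (R *ᵥ uv) = -(R *ᵥ uv) := by
        rw [mulVec_mulVec, ← hRZ, ← mulVec_mulVec, hZuv, mulVec_neg]
      have hZRwv : (Z * R) *ᵥ wv = R *ᵥ wv := by rw [← mulVec_mulVec]; exact hx
      have hZRuv : (Z * R) *ᵥ uv = -(R *ᵥ uv) := by rw [← mulVec_mulVec]; exact hy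
      have hsplit : (R *ᵥ wv) + -(R *ᵥ uv) = wv + uv := by
        calc (R *ᵥ wv) + -(R *ᵥ uv) = (Z * R) *ᵥ wv + (Z * R) *ᵥ uv := by
              rw [hZRwv, hZRuv]
          _ = (Z * R) *ᵥ (wv + uv) := (mulVec_add _ _ _).symm
          _ = v := by rw [hsum v, hv']
          _ = wv + uv := (hsum v).symm
      have hde : (R *ᵥ wv - wv) + (-(R *ᵥ uv) - uv) = 0 := by
        rw [sub_add_sub_comm, hsplit, sub_self]
      have hZde : Z *ᵥ ((R *ᵥ wv - wv) + (-(R *ᵥ uv) - uv))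
          = (R *ᵥ wv - wv) - (-(R *ᵥ uv) - uv) := by
        rw [mulVec_add, mulVec_sub, mulVec_sub, hx, hZwv, mulVec_neg, hy, hZuv,
          neg_neg]
        abel
      have hdiff : (R *ᵥ wv - wv) - (-(R *ᵥ uv) - uv) = 0 := by
        rw [← hZde, hde, mulVec_zero]
      have he : (-(R *ᵥ uv) - uv) = -(R *ᵥ wv - wv) :=
        (neg_eq_of_add_eq_zero_right hde).symm
      have hd0 : R *ᵥ wv - wv = 0 := by
        apply twotor
        rw [he, sub_neg_eq_add] at hdiff
        exact eq_neg_of_add_eq_zero_left hdiff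
      have he0 : -(R *ᵥ uv) - uv = 0 := by rw [he, hd0, neg_zero]
      have hRwv : R *ᵥ wv = wv := sub_eq_zero.mp hd0
      have hRuv : R *ᵥ uv = -uv := by
        have h1 : -(R *ᵥ uv) = uv := sub_eq_zero.mp he0
        exact neg_eq_iff_eq_neg.mp h1
      have hwvW : wv ∈ W := (hmemW wv).mpr hZwv
      rw [hWspan, Submodule.mem_span_singleton] at hwvW
      obtain ⟨a, ha⟩ := hwvW
      have e5 : R *ᵥ wv = (a * χ c') • v0 := by
        rw [← ha, mulVec_smul, hχ c', smul_smul]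
      have e6 : a * χ c' = a := scal _ _ (by rw [← e5, hRwv, ← ha])
      have ha0 : a = 0 := by
        by_contra hane
        exact hχc (mul_left_cancel₀ hane (by rw [e6, mul_one]))
      have hwv0 : wv = 0 := by rw [← ha, ha0, zero_smul]
      have hcc' : c' * (c' * c') = 1 := by rw [← mul_assoc, ← cube, hc3]
      have hR3 : R * (R * R) = 1 := by rw [hRdef, ← hfm, ← hfm, hcc', hf1]
      have e7 : uv = -uv := by
        calc uv = (R * (R * R)) *ᵥ uv := by rw [hR3, one_mulVec]
          _ = R *ᵥ (R *ᵥ (R *ᵥ uv)) := by rw [← mulVec_mulVec, ← mulVec_mulVec]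
          _ = -uv := by rw [hRuv, mulVec_neg, hRuv, neg_neg, hRuv]
      have huv0 : uv = 0 := twotor uv e7
      have hveq : wv + uv = v := hsum v
      rw [hwv0, huv0, zero_add] at hveq
      exact hvne hveq.symm
  · -- finrank U = 1
    have hw₀U : (2⁻¹:ℂ) • (v1 - Z *ᵥ v1) ∈ U := (hmemU _).mpr (hUp v1)
    have hUspan : U = Submodule.span ℂ {(2⁻¹:ℂ) • (v1 - Z *ᵥ v1)} := by
      refine (Submodule.eq_of_le_of_finrank_le ?_ ?_).symm
      · rwa [Submodule.span_singleton_le_iff_mem]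
      · rw [finrank_span_singleton hu1ne, hr]
    have hinvL : ∀ g, ∃ a : ℂ, f g *ᵥ ((2⁻¹:ℂ) • (v1 - Z *ᵥ v1)) = a • ((2⁻¹:ℂ) • (v1 - Z *ᵥ v1)) := by
      intro g
      have hm : f g *ᵥ ((2⁻¹:ℂ) • (v1 - Z *ᵥ v1)) ∈ U := by
        rw [hmemU, mulVec_mulVec, ← hcomm g, ← mulVec_mulVec, (hmemU _).mp hw₀U, mulVec_neg]
      rw [hUspan, Submodule.mem_span_singleton] at hm
      obtain ⟨a, ha⟩ := hm
      exact ⟨a, ha.symm⟩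
    obtain ⟨χ, hχ, hmul, hone, hχz, hχi, hχj, hχk⟩ := chi_main f hf1 hfm hu1ne hinvL
    have e1 : Z *ᵥ ((2⁻¹:ℂ) • (v1 - Z *ᵥ v1)) = (2⁻¹:ℂ) • (v1 - Z *ᵥ v1) := by
      have h := hχ zmat
      rwa [hχz, one_smul] at h
    exact hu1ne (twotor _ (e1.symm.trans (hUp v1)))
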